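/- If M ∈ M_N(ℂ) is Hermitian with eigenvalues a₁ ≤ a₂ ≤ … ≤ a_N and k ≤ N/2, then the rank-k numerical range Λ_k(M) equals the interval [a_k, a_{N-k+1}] (viewed as a subset of ℂ on the real axis). -/

import Mathlib

open Matrix BigOperators Finset

noncomputable section

/-- Numerical range of a complex matrix. -/
def NumRange {n : ℕ} (M : Matrix (Fin n) (Fin n) ℂ) : Set ℂ :=
  { c | ∃ u : Fin n → ℂ, star u ⬝ᵥ u = 1 ∧ star u ⬝ᵥ M.mulVec u = c }

/-- `C` is a rank-`k` compression of `M`: `C` represents `P_S M |_S` in some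
orthonormal basis of a `k`-dimensional subspace `S`. -/
def IsCompression {N k : ℕ} (M : Matrix (Fin N) (Fin N) ℂ)
    (C : Matrix (Fin k) (Fin k) ℂ) : Prop :=
  ∃ f : Fin k → (Fin N → ℂ),
    (∀ i j, star (f i) ⬝ᵥ f j = if i = j then 1 else 0) ∧
    (∀ i j, C i j = star (f i) ⬝ᵥ M.mulVec (f j))

/-- `diag(a,b)` is a compression of `M`. -/
def IsDiagCompression {N : ℕ} (M : Matrix (Fin N) (Fin N) ℂ) (a b : ℂ) : Prop :=
  ∃ u w : Fin N → ℂ,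
    star u ⬝ᵥ u = 1 ∧ star w ⬝ᵥ w = 1 ∧ star u ⬝ᵥ w = 0 ∧
    star u ⬝ᵥ M.mulVec u = a ∧ star w ⬝ᵥ M.mulVec w = b ∧
    star u ⬝ᵥ M.mulVec w = 0 ∧ star w ⬝ᵥ M.mulVec u = 0

/-- The rank-`k` numerical range `Λ_k(M)`. -/
def rankNumRange {N : ℕ} (k : ℕ) (M : Matrix (Fin N) (Fin N) ℂ) : Set ℂ :=
  { c | ∃ P : Matrix (Fin N) (Fin N) ℂ,
      P.IsHermitian ∧ P * P = P ∧ P.rank = k ∧ P * M * P = c • P }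

/-- `M` has an orthonormal basis of eigenvectors with eigenvalue list `z`. -/
def HasONEigenbasis {N : ℕ} (M : Matrix (Fin N) (Fin N) ℂ) (z : Fin N → ℂ) : Prop :=
  ∃ f : Fin N → (Fin N → ℂ),
    (∀ i j, star (f i) ⬝ᵥ f j = if i = j then 1 else 0) ∧
    (∀ j, M.mulVec (f j) = z j • f j)

/-- 2D cross product of complex numbers viewed as plane vectors. -/
def cross2 (p q : ℂ) : ℝ := p.re * q.im - p.im * q.re

/-! ### Auxiliary lemmas -/

lemma aux_convex {x y z : ℝ} (hxz : x ≤ z) (hzy : z ≤ y) :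
    ∃ p q : ℝ, 0 ≤ p ∧ 0 ≤ q ∧ p + q = 1 ∧ p * x + q * y = z := by
  rcases eq_or_lt_of_le (hxz.trans hzy) with h | h
  · exact ⟨1, 0, zero_le_one, le_refl 0, by ring, by nlinarith⟩
  · have hyx : y - x ≠ 0 := by linarith
    refine ⟨1 - (z - x) / (y - x), (z - x) / (y - x), ?_, ?_, by ring, ?_⟩
    · have h1 : (z - x) / (y - x) ≤ 1 := by
        rw [div_le_one (by linarith)]; linarith
      linarith
    · exact div_nonneg (by linarith) (by linarith)
    · have hq : (z - x) / (y - x) * (y - x) = z - x := div_mul_cancel₀ _ hyx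
      ring_nf at hq ⊢
      linarith

lemma aux_dot_expand {N : ℕ} (f : Fin N → Fin N → ℂ)
    (horth : ∀ i j, star (f i) ⬝ᵥ f j = if i = j then 1 else 0)
    (c d e g : ℂ) (p q r s : Fin N) :
    star (c • f p + d • f q) ⬝ᵥ (e • f r + g • f s) =
      star c * e * (if p = r then 1 else 0) + star c * g * (if p = s then 1 else 0)
      + star d * e * (if q = r then 1 else 0) + star d * g * (if q = s then 1 else 0) := by
  simp only [star_add, star_smul, add_dotProduct, dotProduct_add, smul_dotProduct,
    dotProduct_smul, horth, smul_eq_mul]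
  ring

lemma aux_sum_dot {N : ℕ} {ι : Type*} [Fintype ι] (w : ι → Fin N → ℂ) (v : Fin N → ℂ) :
    (∑ i, w i) ⬝ᵥ v = ∑ i, w i ⬝ᵥ v := by
  simp only [dotProduct, Finset.sum_apply, Finset.sum_mul]
  rw [Finset.sum_comm]

lemma aux_dot_sum {N : ℕ} {ι : Type*} [Fintype ι] (v : Fin N → ℂ) (w : ι → Fin N → ℂ) :
    v ⬝ᵥ (∑ i, w i) = ∑ i, v ⬝ᵥ w i := by
  simp only [dotProduct, Finset.sum_apply, Finset.mul_sum]
  rw [Finset.sum_comm]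

lemma aux_dot_sum_sum {N : ℕ} {ι : Type*} [Fintype ι] [DecidableEq ι] (g : ι → Fin N → ℂ)
    (horth : ∀ i j, star (g i) ⬝ᵥ g j = if i = j then 1 else 0)
    (w d : ι → ℂ) :
    star (∑ i, w i • g i) ⬝ᵥ (∑ j, d j • g j) = ∑ i, star (w i) * d i := by
  rw [star_sum, aux_sum_dot]
  have : ∀ i : ι, star (w i • g i) ⬝ᵥ (∑ j, d j • g j) = star (w i) * d i := by
    intro i
    rw [star_smul, smul_dotProduct, aux_dot_sum]
    have h2 : ∀ j : ι, star (g i) ⬝ᵥ (d j • g j) = d j * (if i = j then 1 else 0) := by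
      intro j
      rw [dotProduct_smul, horth, smul_eq_mul]
    simp only [h2, smul_eq_mul, Finset.mul_sum, mul_ite, mul_one, mul_zero,
      Finset.sum_ite_eq, Finset.mem_univ, if_true]
  simp only [this]

lemma aux_card_ge {N c : ℕ} (hc : c ≤ N) :
    Fintype.card {j : Fin N // c ≤ j.val} = N - c := by
  have e : {j : Fin N // c ≤ j.val} ≃ Fin (N - c) :=
    { toFun := fun j => ⟨j.1.val - c, by have h1 := j.1.isLt; have h2 := j.2; omega⟩
      invFun := fun m => ⟨⟨m.val + c, by have := m.isLt; omega⟩, by simp⟩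
      left_inv := fun j => by
        apply Subtype.ext; apply Fin.ext
        have h1 := j.2
        simp only [Fin.val_mk]
        omega
      right_inv := fun m => by apply Fin.ext; simp only [Fin.val_mk]; omega }
  rw [Fintype.card_congr e, Fintype.card_fin]

lemma aux_card_le {N c : ℕ} (hc : c < N) :
    Fintype.card {j : Fin N // j.val ≤ c} = c + 1 := by
  have e : {j : Fin N // j.val ≤ c} ≃ Fin (c + 1) :=
    { toFun := fun j => ⟨j.1.val, by have := j.2; omega⟩
      invFun := fun m => ⟨⟨m.val, by have := m.isLt; omega⟩, by
        have := m.isLt; simp only [Fin.val_mk]; omega⟩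
      left_inv := fun j => by apply Subtype.ext; apply Fin.ext; simp
      right_inv := fun m => by apply Fin.ext; simp }
  rw [Fintype.card_congr e, Fintype.card_fin]

lemma aux_orth_li {N : ℕ} {ι : Type*} [Fintype ι] [DecidableEq ι] (g : ι → Fin N → ℂ)
    (horth : ∀ i j, star (g i) ⬝ᵥ g j = if i = j then 1 else 0) :
    LinearIndependent ℂ g := by
  rw [Fintype.linearIndependent_iff]
  intro w hw i
  have h := congrArg (fun v => star (g i) ⬝ᵥ v) hw
  simp only [dotProduct_zero] at h
  rw [aux_dot_sum] at h
  have : ∀ j : ι, star (g i) ⬝ᵥ (w j • g j) = w j * (if i = j then 1 else 0) := by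
    intro j; rw [dotProduct_smul, horth, smul_eq_mul]
  simp only [this, mul_ite, mul_one, mul_zero, Finset.sum_ite_eq] at h
  simpa using h

/-- key computation: value of the form on a vector fixed by `P` -/
lemma aux_fixed_val {N : ℕ} (P M : Matrix (Fin N) (Fin N) ℂ) (c : ℂ)
    (hP : Pᴴ = P) (hPMP : P * M * P = c • P) (u : Fin N → ℂ) (hu : P.mulVec u = u) :
    star u ⬝ᵥ M.mulVec u = c * (star u ⬝ᵥ u) := by
  conv_lhs => rw [← hu]
  rw [star_mulVec, hP, mulVec_mulVec, dotProduct_mulVec, vecMul_vecMul, ← mul_assoc, hPMP,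
    ← dotProduct_mulVec, smul_mulVec, dotProduct_smul, smul_eq_mul, hu]


/-- Reverse direction workhorse: for any eigenvector index set `Q` large enough,
there is a unit-direction vector fixed by `P` supported on those eigenvectors. -/
lemma aux_main {N k : ℕ} (P M : Matrix (Fin N) (Fin N) ℂ)
    (hP : Pᴴ = P) (hPP : P * P = P) (hrank : P.rank = k) (c : ℂ)
    (hPMP : P * M * P = c • P)
    (f : Fin N → Fin N → ℂ)
    (horth : ∀ i j, star (f i) ⬝ᵥ f j = if i = j then 1 else 0)
    (aC : Fin N → ℝ) (heigen : ∀ j, M.mulVec (f j) = (aC j : ℂ) • f j)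
    (Q : Fin N → Prop) [DecidablePred Q]
    (hcard : N < Fintype.card {j // Q j} + k) :
    ∃ (s : ℝ) (r : {j // Q j} → ℝ), 0 < s ∧ (∀ j, 0 ≤ r j) ∧ (∑ j, r j) = s ∧
      c * (s : ℂ) = ((∑ j, r j * aC j.1 : ℝ) : ℂ) := by
  classical
  set S : Submodule ℂ (Fin N → ℂ) := LinearMap.range P.mulVecLin with hSdef
  set g : {j // Q j} → (Fin N → ℂ) := fun j => f j.1 with hgdef
  have horthg : ∀ i j : {j // Q j}, star (g i) ⬝ᵥ g j = if i = j then 1 else 0 := by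
    intro i j
    rw [hgdef]
    simp only []
    rw [horth]
    exact if_congr ⟨fun h => Subtype.ext h, fun h => congrArg Subtype.val h⟩ rfl rfl
  set T : Submodule ℂ (Fin N → ℂ) := Submodule.span ℂ (Set.range g) with hTdef
  have hTfin : Module.finrank ℂ T = Fintype.card {j // Q j} :=
    finrank_span_eq_card (aux_orth_li g horthg)
  have hSfin : Module.finrank ℂ S = k := hrank
  have hsum := Submodule.finrank_sup_add_finrank_inf_eq S T
  have hsup : Module.finrank ℂ ↥(S ⊔ T) ≤ N := by
    have h1 : Module.finrank ℂ ↥(S ⊔ T) ≤ Module.finrank ℂ (Fin N → ℂ) :=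
      Submodule.finrank_le _
    rwa [Module.finrank_fin_fun] at h1
  have hinf : 0 < Module.finrank ℂ ↥(S ⊓ T) := by omega
  have hne : S ⊓ T ≠ ⊥ := by
    intro h
    rw [h, finrank_bot] at hinf
    omega
  obtain ⟨u, huST, hune⟩ := (Submodule.ne_bot_iff _).mp hne
  have hPu : P.mulVec u = u := by
    obtain ⟨v, hv⟩ := huST.1
    rw [Matrix.mulVecLin_apply] at hv
    rw [← hv, Matrix.mulVec_mulVec, hPP]
  obtain ⟨w, hw⟩ := (Submodule.mem_span_range_iff_exists_fun ℂ).mp huST.2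
  have hMu : M.mulVec u = ∑ j, (w j * (aC j.1 : ℂ)) • g j := by
    rw [← hw]
    have h1 : M.mulVec (∑ j, w j • g j) = ∑ j, M.mulVec (w j • g j) := by
      ext n
      simp only [Matrix.mulVec, dotProduct, Finset.sum_apply, Pi.smul_apply, smul_eq_mul,
        Finset.mul_sum]
      rw [Finset.sum_comm]
    rw [h1]
    refine Finset.sum_congr rfl fun j _ => ?_
    rw [Matrix.mulVec_smul, heigen, smul_smul]
  have hE : star u ⬝ᵥ M.mulVec u = ∑ j, star (w j) * (w j * (aC j.1 : ℂ)) := by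
    rw [hMu]
    conv_lhs => rw [← hw]
    exact aux_dot_sum_sum g horthg w _
  have hQu : star u ⬝ᵥ u = ∑ j, star (w j) * w j := by
    conv_lhs => rw [← hw]
    exact aux_dot_sum_sum g horthg w w
  set r : {j // Q j} → ℝ := fun j => Complex.normSq (w j) with hrdef
  have hstar : ∀ j, star (w j) * w j = ((r j : ℝ) : ℂ) := by
    intro j
    rw [hrdef]
    simp [Complex.normSq_eq_conj_mul_self, Complex.star_def]
  refine ⟨∑ j, r j, r, ?_, fun j => Complex.normSq_nonneg _, rfl, ?_⟩
  · have h3 : 0 ≤ ∑ j, r j := Finset.sum_nonneg fun j _ => Complex.normSq_nonneg _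
    have h2 : (∑ j, r j) ≠ 0 := by
      intro h
      have hall := (Finset.sum_eq_zero_iff_of_nonneg
        (fun j _ => Complex.normSq_nonneg (w j))).mp h
      apply hune
      rw [← hw]
      refine Finset.sum_eq_zero fun j _ => ?_
      have : w j = 0 := Complex.normSq_eq_zero.mp (hall j (Finset.mem_univ j))
      rw [this, zero_smul]
    exact lt_of_le_of_ne h3 (Ne.symm h2)
  · have hval := aux_fixed_val P M c hP hPMP u hPu
    rw [hE, hQu] at hval
    rw [show ((∑ j, r j : ℝ) : ℂ) = ∑ j, star (w j) * w j by
      push_cast; exact Finset.sum_congr rfl fun j _ => (hstar j).symm]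
    rw [← hval]
    push_cast
    refine Finset.sum_congr rfl fun j _ => ?_
    rw [← mul_assoc, hstar j]


open ComplexOrder in
/-- Forward direction: construction of a rank-`k` projection compressing `M` to `lam`. -/
lemma aux_construct {N k : ℕ} (hk : 1 ≤ k) (hkN : 2 * k ≤ N)
    (M : Matrix (Fin N) (Fin N) ℂ)
    (f : Fin N → Fin N → ℂ)
    (horth : ∀ i j, star (f i) ⬝ᵥ f j = if i = j then 1 else 0)
    (aC : Fin N → ℝ) (heigen : ∀ j, M.mulVec (f j) = (aC j : ℂ) • f j)
    (ha : Monotone aC) (lam : ℝ)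
    (h1 : aC ⟨k - 1, Nat.lt_of_lt_of_le (by omega : k - 1 < N + 0) (le_refl N)⟩ ≤ lam)
      (h2 : lam ≤ aC ⟨N - k, Nat.lt_of_lt_of_le (by omega : N - k < N + 0) (le_refl N)⟩) :
    ∃ P : Matrix (Fin N) (Fin N) ℂ,
      P.IsHermitian ∧ P * P = P ∧ P.rank = k ∧ P * M * P = (lam : ℂ) • P := by
  classical
  set lo : Fin k → Fin N := fun i => ⟨i.1, by have := i.isLt; omega⟩ with hlodef
  set hi : Fin k → Fin N := fun i => ⟨N - 1 - i.1, by omega⟩ with hhidef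
  have hlolam : ∀ i, aC (lo i) ≤ lam := by
    intro i
    refine le_trans (ha ?_) h1
    show (lo i).1 ≤ k - 1
    have := i.isLt
    simp only [hlodef]
    omega
  have hlamhi : ∀ i, lam ≤ aC (hi i) := by
    intro i
    refine le_trans h2 (ha ?_)
    show N - k ≤ (hi i).1
    have := i.isLt
    simp only [hhidef]
    omega
  choose p q hp hq hpq hcomb using fun i => aux_convex (hlolam i) (hlamhi i)
  set u : Fin k → Fin N → ℂ := fun i =>
    ((Real.sqrt (p i) : ℝ) : ℂ) • f (lo i) + ((Real.sqrt (q i) : ℝ) : ℂ) • f (hi i) with hudef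
  have hlohi : ∀ i j, lo i ≠ hi j := by
    intro i j h
    have hi1 := i.isLt
    have hj1 := j.isLt
    rw [Fin.ext_iff] at h
    simp only [hlodef, hhidef] at h
    omega
  have hloeq : ∀ i j : Fin k, (lo i = lo j) ↔ i = j := by
    intro i j
    rw [Fin.ext_iff, Fin.ext_iff (a := i)]
  have hhieq : ∀ i j : Fin k, (hi i = hi j) ↔ i = j := by
    intro i j
    have hi1 := i.isLt
    have hj1 := j.isLt
    rw [Fin.ext_iff, Fin.ext_iff (a := i)]
    simp only [hhidef]
    omega
  have hsq : ∀ i, ((Real.sqrt (p i) : ℝ) : ℂ) * ((Real.sqrt (p i) : ℝ) : ℂ) = ((p i : ℝ) : ℂ) := by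
    intro i
    rw [← Complex.ofReal_mul, Real.mul_self_sqrt (hp i)]
  have hsq' : ∀ i, ((Real.sqrt (q i) : ℝ) : ℂ) * ((Real.sqrt (q i) : ℝ) : ℂ) = ((q i : ℝ) : ℂ) := by
    intro i
    rw [← Complex.ofReal_mul, Real.mul_self_sqrt (hq i)]
  have horthu : ∀ i j, star (u i) ⬝ᵥ u j = if i = j then 1 else 0 := by
    intro i j
    have d1 : (if lo i = lo j then (1:ℂ) else 0) = if i = j then 1 else 0 :=
      if_congr (hloeq i j) rfl rfl
    have d2 : (if lo i = hi j then (1:ℂ) else 0) = 0 := if_neg (hlohi i j)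
    have d3 : (if hi i = lo j then (1:ℂ) else 0) = 0 := if_neg (fun h => hlohi j i h.symm)
    have d4 : (if hi i = hi j then (1:ℂ) else 0) = if i = j then 1 else 0 :=
      if_congr (hhieq i j) rfl rfl
    rw [hudef]
    simp only []
    rw [aux_dot_expand f horth, d1, d2, d3, d4]
    simp only [Complex.star_def, Complex.conj_ofReal, mul_zero, add_zero, zero_add]
    by_cases hij : i = j
    · subst hij
      simp only [if_pos rfl, if_true, mul_one, hsq, hsq']
      rw [← Complex.ofReal_add, hpq i]
      norm_num
    · simp only [if_neg hij, mul_zero, add_zero]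
  have hMu : ∀ j, M.mulVec (u j) =
      (((Real.sqrt (p j) : ℝ) : ℂ) * ((aC (lo j) : ℝ) : ℂ)) • f (lo j)
      + (((Real.sqrt (q j) : ℝ) : ℂ) * ((aC (hi j) : ℝ) : ℂ)) • f (hi j) := by
    intro j
    rw [hudef]
    simp only []
    rw [Matrix.mulVec_add, Matrix.mulVec_smul, Matrix.mulVec_smul, heigen, heigen,
      smul_smul, smul_smul]
  have hMorthu : ∀ i j, star (u i) ⬝ᵥ M.mulVec (u j) =
      if i = j then ((lam : ℝ) : ℂ) else 0 := by
    intro i j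
    have d1 : (if lo i = lo j then (1:ℂ) else 0) = if i = j then 1 else 0 :=
      if_congr (hloeq i j) rfl rfl
    have d2 : (if lo i = hi j then (1:ℂ) else 0) = 0 := if_neg (hlohi i j)
    have d3 : (if hi i = lo j then (1:ℂ) else 0) = 0 := if_neg (fun h => hlohi j i h.symm)
    have d4 : (if hi i = hi j then (1:ℂ) else 0) = if i = j then 1 else 0 :=
      if_congr (hhieq i j) rfl rfl
    rw [hMu j, hudef]
    simp only []
    rw [aux_dot_expand f horth, d1, d2, d3, d4]
    simp only [Complex.star_def, Complex.conj_ofReal, mul_zero, add_zero, zero_add]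
    by_cases hij : i = j
    · subst hij
      simp only [if_pos rfl, if_true, mul_one]
      have e1 : ((Real.sqrt (p i) : ℝ) : ℂ) * (((Real.sqrt (p i) : ℝ) : ℂ) * ((aC (lo i) : ℝ) : ℂ))
          = ((p i * aC (lo i) : ℝ) : ℂ) := by
        rw [← mul_assoc, hsq]
        push_cast
        ring
      have e2 : ((Real.sqrt (q i) : ℝ) : ℂ) * (((Real.sqrt (q i) : ℝ) : ℂ) * ((aC (hi i) : ℝ) : ℂ))
          = ((q i * aC (hi i) : ℝ) : ℂ) := by
        rw [← mul_assoc, hsq']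
        push_cast
        ring
      rw [e1, e2, ← Complex.ofReal_add, hcomb i]
    · simp only [if_neg hij, mul_zero, add_zero]
  set U : Matrix (Fin N) (Fin k) ℂ := Matrix.of (fun n i => u i n) with hUdef
  have hUU : Uᴴ * U = 1 := by
    ext i j
    rw [Matrix.mul_apply, Matrix.one_apply, ← horthu i j]
    simp [dotProduct, Matrix.conjTranspose_apply, hUdef]
  have hUMU : Uᴴ * M * U = ((lam : ℝ) : ℂ) • (1 : Matrix (Fin k) (Fin k) ℂ) := by
    ext i j
    have hr : (((lam : ℝ) : ℂ) • (1 : Matrix (Fin k) (Fin k) ℂ)) i j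
        = if i = j then ((lam : ℝ) : ℂ) else 0 := by
      simp [Matrix.one_apply, mul_ite]
    rw [Matrix.mul_apply, hr, ← hMorthu i j]
    simp only [Matrix.mul_apply, dotProduct, Matrix.mulVec, Matrix.conjTranspose_apply,
      Matrix.of_apply, Pi.star_apply, Finset.sum_mul, Finset.mul_sum, hUdef, smul_eq_mul,
      mul_ite, mul_one, mul_zero]
    rw [Finset.sum_comm]
    refine Finset.sum_congr rfl fun n _ => Finset.sum_congr rfl fun m _ => ?_
    ring
  refine ⟨U * Uᴴ, ?_, ?_, ?_, ?_⟩
  · show (U * Uᴴ)ᴴ = U * Uᴴ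
    rw [Matrix.conjTranspose_mul, Matrix.conjTranspose_conjTranspose]
  · rw [Matrix.mul_assoc, ← Matrix.mul_assoc Uᴴ, hUU, Matrix.one_mul]
  · rw [Matrix.rank_self_mul_conjTranspose, ← Matrix.rank_conjTranspose_mul_self, hUU,
      Matrix.rank_one, Fintype.card_fin]
  · calc U * Uᴴ * M * (U * Uᴴ) = U * (Uᴴ * M * U) * Uᴴ := by
          simp only [Matrix.mul_assoc]
      _ = (lam : ℂ) • (U * Uᴴ) := by
          rw [hUMU, Matrix.mul_smul, Matrix.mul_one, Matrix.smul_mul]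

theorem stmt_4 {N k : ℕ} (hk : 1 ≤ k) (hkN : 2 * k ≤ N)
    (M : Matrix (Fin N) (Fin N) ℂ) (hM : M.IsHermitian)
    (a : Fin N → ℝ) (ha : Monotone a)
    (heig : HasONEigenbasis M (fun j => (a j : ℂ))) :
    rankNumRange k M =
      { c : ℂ | c.im = 0 ∧ a ⟨k - 1, by omega⟩ ≤ c.re ∧ c.re ≤ a ⟨N - k, by omega⟩ } := by
  classical
  obtain ⟨f, horth, heigen⟩ := heig
  have heigen' : ∀ j, M.mulVec (f j) = ((a j : ℝ) : ℂ) • f j := heigen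
  ext c
  simp only [rankNumRange, Set.mem_setOf_eq]
  constructor
  · rintro ⟨P, hPh, hPP, hrank, hPMP⟩
    -- lower bound (and realness)
    have hcard1 : N < Fintype.card {j : Fin N // k - 1 ≤ j.1} + k := by
      rw [aux_card_ge (by omega)]
      omega
    obtain ⟨s, r, hs, hr0, hrs, heq⟩ :=
      aux_main P M hPh hPP hrank c hPMP f horth a heigen' (fun j => k - 1 ≤ j.1) hcard1
    have hsne : ((s : ℝ) : ℂ) ≠ 0 := by
      exact_mod_cast hs.ne'
    set e : ℝ := ∑ j : {j : Fin N // k - 1 ≤ j.1}, r j * a j.1 with hedef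
    have hc : c = ((e / s : ℝ) : ℂ) := by
      rw [Complex.ofReal_div, eq_div_iff hsne]
      exact heq
    have hge : a ⟨k - 1, by omega⟩ * s ≤ e := by
      rw [hedef, ← hrs, Finset.mul_sum]
      refine Finset.sum_le_sum fun j _ => ?_
      rw [mul_comm (a _)]
      exact mul_le_mul_of_nonneg_left (ha (by exact j.2)) (hr0 j)
    -- upper bound
    have hcard2 : N < Fintype.card {j : Fin N // j.1 ≤ N - k} + k := by
      rw [aux_card_le (by omega)]
      omega
    obtain ⟨s', r', hs', hr0', hrs', heq'⟩ :=
      aux_main P M hPh hPP hrank c hPMP f horth a heigen' (fun j => j.1 ≤ N - k) hcard2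
    have hsne' : ((s' : ℝ) : ℂ) ≠ 0 := by
      exact_mod_cast hs'.ne'
    set e' : ℝ := ∑ j : {j : Fin N // j.1 ≤ N - k}, r' j * a j.1 with hedef'
    have hc' : c = ((e' / s' : ℝ) : ℂ) := by
      rw [Complex.ofReal_div, eq_div_iff hsne']
      exact heq'
    have hle : e' ≤ a ⟨N - k, by omega⟩ * s' := by
      rw [hedef', ← hrs', Finset.mul_sum]
      refine Finset.sum_le_sum fun j _ => ?_
      rw [mul_comm (a _)]
      exact mul_le_mul_of_nonneg_left (ha (by exact j.2)) (hr0' j)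
    refine ⟨by rw [hc]; exact Complex.ofReal_im _, ?_, ?_⟩
    · rw [hc, Complex.ofReal_re, le_div_iff₀ hs]
      exact hge
    · rw [hc', Complex.ofReal_re, div_le_iff₀ hs']
      linarith [hle]
  · rintro ⟨him, hlow, hhigh⟩
    have hc : c = ((c.re : ℝ) : ℂ) := by
      apply Complex.ext
      · rw [Complex.ofReal_re]
      · rw [Complex.ofReal_im, him]
    obtain ⟨P, hh1, hh2, hh3, hh4⟩ :=
      aux_construct hk hkN M f horth a heigen' ha c.re hlow hhigh
    refine ⟨P, hh1, hh2, hh3, ?_⟩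
    rw [hc]
    exact hh4
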